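/- Let (x*, y*) satisfy A_ff x* + A_fs y* = b1 and A_sf x* + A_ss y* = b2, and let (x_p*, y_p*) ∈ X × Y satisfy the projected equations Π_X(A_ff x_p* + A_fs y_p* − b1) = 0 and Π_Y(A_sf x_p* + A_ss y_p* − b2) = 0. Suppose U_Xᵀ A_ff U_X is invertible and set c1 := U_X (U_Xᵀ A_ff U_X)^{-1} U_Xᵀ. Then the approximation-error identity x_p* − x* = (I − c1 A_ff)(Π_X x* − x*) − c1 A_fs (y_p* − y*) holds. -/
import Mathlib


open Matrix MeasureTheory Finset
open scoped BigOperators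

noncomputable section
namespace TTSA

abbrev E (n : ℕ) : Type := EuclideanSpace ℝ (Fin n)

def mv {k l : ℕ} (M : Matrix (Fin k) (Fin l) ℝ) (x : E l) : E k :=
  Matrix.toEuclideanLin M x

def specNorm {k l : ℕ} (M : Matrix (Fin k) (Fin l) ℝ) : ℝ :=
  ‖LinearMap.toContinuousLinearMap (Matrix.toEuclideanLin M)‖

def sigmaMin {k : ℕ} (M : Matrix (Fin k) (Fin k) ℝ) : ℝ :=
  sInf ((fun v : E k => ‖mv M v‖) '' {v | ‖v‖ = 1})

def resolvent {k l : ℕ} (U : Matrix (Fin k) (Fin l) ℝ) (A : Matrix (Fin k) (Fin k) ℝ) :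
    Matrix (Fin k) (Fin k) ℝ :=
  U * (Uᵀ * A * U)⁻¹ * Uᵀ

lemma mv_mul {k l p : ℕ} (M : Matrix (Fin k) (Fin l) ℝ) (N : Matrix (Fin l) (Fin p) ℝ)
    (x : E p) : mv (M * N) x = mv M (mv N x) := by
  simp [mv, Matrix.toEuclideanLin_apply, Matrix.mulVec_mulVec]

lemma mv_one {k : ℕ} (x : E k) : mv (1 : Matrix (Fin k) (Fin k) ℝ) x = x := by
  simp [mv, Matrix.toEuclideanLin_apply]

lemma mv_sub_mat {k l : ℕ} (M N : Matrix (Fin k) (Fin l) ℝ) (x : E l) :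
    mv (M - N) x = mv M x - mv N x := by
  simp [mv, map_sub]

lemma mv_add {k l : ℕ} (M : Matrix (Fin k) (Fin l) ℝ) (x y : E l) :
    mv M (x + y) = mv M x + mv M y := by
  simp [mv, map_add]

lemma mv_sub {k l : ℕ} (M : Matrix (Fin k) (Fin l) ℝ) (x y : E l) :
    mv M (x - y) = mv M x - mv M y := by
  simp [mv, map_sub]

lemma mv_zero {k l : ℕ} (M : Matrix (Fin k) (Fin l) ℝ) :
    mv M (0 : E l) = 0 := by
  simp [mv, map_zero]

/-- approximation-error identity for the fast component:
`x_p* - x* = (I - c1 A_ff)(Π_X x* - x*) - c1 A_fs (y_p* - y*)`,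
with `c1 = resolvent U_X A_ff`. -/
theorem fast_approximation_identity {n m d r : ℕ}
    (Aff : Matrix (Fin n) (Fin n) ℝ) (Afs : Matrix (Fin n) (Fin m) ℝ)
    (Asf : Matrix (Fin m) (Fin n) ℝ) (Ass : Matrix (Fin m) (Fin m) ℝ)
    (b1 : E n) (b2 : E m)
    (UX : Matrix (Fin n) (Fin d) ℝ) (UY : Matrix (Fin m) (Fin r) ℝ)
    (hUX : UXᵀ * UX = 1) (hUY : UYᵀ * UY = 1)
    (xs : E n) (ys : E m)
    (hxs : mv Aff xs + mv Afs ys = b1) (hys : mv Asf xs + mv Ass ys = b2)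
    (xp : E n) (yp : E m)
    (hxp : xp ∈ Set.range (mv UX)) (hyp : yp ∈ Set.range (mv UY))
    (hsolx : mv (UX * UXᵀ) (mv Aff xp + mv Afs yp - b1) = 0)
    (hsoly : mv (UY * UYᵀ) (mv Asf xp + mv Ass yp - b2) = 0)
    (h1 : IsUnit (UXᵀ * Aff * UX)) :
    xp - xs = mv (1 - resolvent UX Aff * Aff) (mv (UX * UXᵀ) xs - xs) -
      mv (resolvent UX Aff * Afs) (yp - ys) := by
  set c := resolvent UX Aff with hc
  have hB : (UXᵀ * Aff * UX)⁻¹ * (UXᵀ * Aff * UX) = 1 :=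
    Matrix.nonsing_inv_mul _ ((Matrix.isUnit_iff_isUnit_det _).mp h1)
  -- key matrix identities
  have key1 : c * Aff * UX = UX := by
    have h : c * Aff * UX = UX * ((UXᵀ * Aff * UX)⁻¹ * (UXᵀ * Aff * UX)) := by
      simp only [hc, resolvent, Matrix.mul_assoc]
    rw [h, hB, Matrix.mul_one]
  have key2 : c * (UX * UXᵀ) = c := by
    have h : c * (UX * UXᵀ) = UX * ((UXᵀ * Aff * UX)⁻¹ * ((UXᵀ * UX) * UXᵀ)) := by
      simp only [hc, resolvent, Matrix.mul_assoc]
    rw [h, hUX, Matrix.one_mul]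
    simp only [hc, resolvent, Matrix.mul_assoc]
  have key3 : c * Aff * (UX * UXᵀ) = UX * UXᵀ := by
    rw [← Matrix.mul_assoc, key1]
  -- xp is a fixed point of c * Aff
  obtain ⟨w, hw⟩ := hxp
  have hxp' : mv (c * Aff) xp = xp := by
    rw [← hw, ← mv_mul, key1]
  -- the projected equation, hit with c
  have h2 := congrArg (mv c) hsolx
  rw [← mv_mul, key2, ← hxs, mv_zero] at h2
  have h4 : mv (c * Aff) xp + mv (c * Afs) yp = mv (c * Aff) xs + mv (c * Afs) ys := by
    have h2' := sub_eq_zero.mp (by rwa [mv_sub, mv_add, mv_add] at h2)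
    simpa [mv_mul] using h2'
  rw [hxp'] at h4
  have h5 : xp = mv (c * Aff) xs + mv (c * Afs) ys - mv (c * Afs) yp :=
    eq_sub_of_add_eq h4
  have keyv : mv (c * Aff) (mv (UX * UXᵀ) xs) = mv (UX * UXᵀ) xs := by
    rw [← mv_mul, ← Matrix.mul_assoc, key1]
  rw [h5, mv_sub_mat, mv_one, mv_sub (c * Aff), keyv, mv_sub (c * Afs)]
  abel

end TTSA
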